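/- Let v_1, ..., v_n, v_1 be a closed tour in a complete directed graph whose arcs of weight 1 form the set S of length-2 strings (as strings v_i v_{i+1}), and suppose the tour has total weight k. Then either all n consecutive pairs (including the wrap-around pair) are in S, in which case the open path v_1...v_n realizes n−1 strings of S as substrings; or some consecutive pair v_i v_{i+1} is not in S, in which case the rotated path starting after that pair realizes exactly k strings of S as substrings. -/

import Mathlib

/-- Number of cyclic consecutive pairs of the tour `f 0, …, f (n-1), f 0`
that lie in `S`. -/
def cycCount (n : ℕ) [NeZero n] (S : Finset (Fin n × Fin n))
    (f : Fin n → Fin n) : ℕ :=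
  (Finset.univ.filter (fun i : Fin n => (f i, f (i + 1)) ∈ S)).card

/-- Number of consecutive pairs of the open path `f 0, …, f (n-1)` that lie in
`S`, i.e. the number of strings of `S` realized as substrings. -/
def pathCount (n : ℕ) [NeZero n] (S : Finset (Fin n × Fin n))
    (f : Fin n → Fin n) : ℕ :=
  (Finset.univ.filter
    (fun i : Fin n => (i : ℕ) + 1 < n ∧ (f i, f (i + 1)) ∈ S)).card

/-- Tour rotation: for a closed tour of weight `k` (its cyclic pairs in `S`
counted), either all `n` cyclic consecutive pairs are in `S` and the open path
realizes `n − 1` strings of `S` as substrings, or some cyclic pair is not in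
`S` and the rotation starting just after it realizes exactly `k` strings. -/
lemma neg_one_val (n : ℕ) [NeZero n] : ((-1 : Fin n) : ℕ) = n - 1 := by
  simp only [Fin.neg_def, Fin.val_one']
  have := Nat.pos_of_ne_zero (NeZero.ne n)
  rcases Nat.lt_or_ge 1 n with h | h
  · rw [Nat.mod_eq_of_lt h, Nat.mod_eq_of_lt (by omega)]
  · interval_cases n
    simp

lemma last_eq_neg_one (n : ℕ) [NeZero n] (j : Fin n) (hj : (j:ℕ) + 1 ≥ n) : j = -1 := by
  have h1 : (j:ℕ) = n - 1 := by have := j.isLt; omega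
  apply Fin.ext
  rw [h1]
  simp only [Fin.neg_def, Fin.val_one']
  have := Nat.pos_of_ne_zero (NeZero.ne n)
  rcases Nat.lt_or_ge 1 n with h | h
  · rw [Nat.mod_eq_of_lt h, Nat.mod_eq_of_lt (by omega)]
  · interval_cases n
    simp

theorem stmt_17 (n : ℕ) [NeZero n] (S : Finset (Fin n × Fin n))
    (σ : Equiv.Perm (Fin n)) :
    ((∀ i : Fin n, (σ i, σ (i + 1)) ∈ S) ∧ pathCount n S σ = n - 1) ∨
    (∃ c : Fin n, (σ c, σ (c + 1)) ∉ S ∧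
      pathCount n S (fun j => σ (c + 1 + j)) = cycCount n S σ) := by
  by_cases h : ∀ i : Fin n, (σ i, σ (i + 1)) ∈ S
  · left
    refine ⟨h, ?_⟩
    unfold pathCount
    have h2 : (Finset.univ.filter (fun i : Fin n => (i:ℕ)+1 < n ∧ (σ i, σ (i+1)) ∈ S))
        = Finset.univ.erase (-1 : Fin n) := by
      ext i
      simp only [Finset.mem_filter, Finset.mem_univ, true_and, Finset.mem_erase, and_true]
      constructor
      · rintro ⟨hlt, -⟩ rfl
        rw [neg_one_val] at hlt
        have := Nat.pos_of_ne_zero (NeZero.ne n)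
        omega
      · intro hi
        refine ⟨?_, h i⟩
        by_contra hc
        exact hi (last_eq_neg_one n i (by omega))
    rw [h2, Finset.card_erase_of_mem (Finset.mem_univ _)]
    simp
  · right
    push_neg at h
    obtain ⟨c, hc⟩ := h
    refine ⟨c, hc, ?_⟩
    unfold pathCount cycCount
    have key : (Finset.univ.filter
        (fun j : Fin n => (j:ℕ)+1 < n ∧ (σ (c+1+j), σ (c+1+(j+1))) ∈ S))
        = Finset.univ.filter (fun j : Fin n => (σ (c+1+j), σ (c+1+j+1)) ∈ S) := by
      ext j
      simp only [Finset.mem_filter, Finset.mem_univ, true_and]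
      rw [add_assoc (c+1) j 1]
      constructor
      · exact And.right
      · intro hj
        refine ⟨?_, hj⟩
        by_contra hlt
        have hj1 : j = -1 := last_eq_neg_one n j (by omega)
        rw [hj1] at hj
        have e1 : c + 1 + -1 = c := by abel
        have e2 : c + 1 + (-1 + 1) = c + 1 := by abel
        rw [e1, e2] at hj
        exact hc hj
    rw [key]
    apply Finset.card_bij (fun j _ => c + 1 + j)
    · intro j hj
      simp only [Finset.mem_filter, Finset.mem_univ, true_and] at hj ⊢
      exact hj
    · intro a _ b _ hab
      exact add_left_cancel hab
    · intro i hi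
      refine ⟨i - (c+1), Finset.mem_filter.2 ⟨Finset.mem_univ _, ?_⟩, by abel⟩
      simp only [Finset.mem_filter, Finset.mem_univ, true_and] at hi
      have : c + 1 + (i - (c+1)) = i := by abel
      rw [this]
      exact hi
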